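/- Let C be the R-submodule of R² (R = F_q[x]/(x^m−λ)) generated by (g₁₁(x), g₁₂(x)) and (0, g₂₂(x)), where g₁₁, g₂₂ divide x^m − λ. If C is generated by a single element of R², then g₁₁(x) g₂₂(x) ≡ 0 (mod x^m − λ). -/
import Mathlib


open Polynomial

set_option synthInstance.maxHeartbeats 1000000 in
set_option maxHeartbeats 2000000 in

/-- Let `C ⊆ R²` (with `R = F_q[x]/(x^m - λ)`) be generated by `(g₁₁, g₁₂)` and
`(0, g₂₂)`, with `g₁₁, g₂₂ ∣ x^m - λ`.  If `C` is generated by a single element,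
then `g₁₁ g₂₂ ≡ 0 (mod x^m - λ)`. -/
theorem stmt13 {F : Type*} [Field F] [Fintype F] (m : ℕ) (hm : 0 < m) (lam : F)
    (hlam : lam ≠ 0) (g11 g12 g22 : F[X])
    (h11 : g11 ∣ X ^ m - C lam) (h22 : g22 ∣ X ^ m - C lam)
    (mk : F[X] →+* F[X] ⧸ Ideal.span {X ^ m - C lam})
    (hmk : mk = Ideal.Quotient.mk (Ideal.span {X ^ m - C lam}))
    (hone : ∃ v : (F[X] ⧸ Ideal.span {X ^ m - C lam}) × (F[X] ⧸ Ideal.span {X ^ m - C lam}),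
      Submodule.span (F[X] ⧸ Ideal.span {X ^ m - C lam})
          ({(mk g11, mk g12), (0, mk g22)} :
            Set ((F[X] ⧸ Ideal.span {X ^ m - C lam}) × (F[X] ⧸ Ideal.span {X ^ m - C lam}))) =
        Submodule.span _ {v}) :
    (X ^ m - C lam) ∣ g11 * g22 := by
  obtain ⟨v, hv⟩ := hone
  have h1 : (mk g11, mk g12) ∈ Submodule.span (F[X] ⧸ Ideal.span {X ^ m - C lam})
      ({v} : Set _) := by
    rw [← hv]; exact Submodule.subset_span (by simp)
  have h2 : ((0 : F[X] ⧸ Ideal.span {X ^ m - C lam}), mk g22) ∈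
      Submodule.span (F[X] ⧸ Ideal.span {X ^ m - C lam}) ({v} : Set _) := by
    rw [← hv]; exact Submodule.subset_span (by simp)
  rw [Submodule.mem_span_singleton] at h1 h2
  obtain ⟨r, hr⟩ := h1
  obtain ⟨s, hs⟩ := h2
  have hr1 : r * v.1 = mk g11 := congrArg Prod.fst hr
  have hs1 : s * v.1 = 0 := congrArg Prod.fst hs
  have hs2 : s * v.2 = mk g22 := congrArg Prod.snd hs
  have key : mk (g11 * g22) = 0 := by
    have : r * v.2 * (s * v.1) = 0 := by rw [hs1, mul_zero]
    rw [map_mul, ← hr1, ← hs2, ← this]; ring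
  rw [hmk] at key
  rwa [Ideal.Quotient.eq_zero_iff_mem, Ideal.mem_span_singleton] at key
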